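/- With f ∈ ℤΓ invertible in ℓ¹(Γ), fix irrational κ ∈ [0,1], let L : 𝕋^Γ → ℓ∞(Γ) be the lift taking values in [-1+κ, κ), and define P(x) := L(x)·f*. Then for every x ∈ X_f, P(x) takes integer values, and ξ(P(x)) = x; in particular ξ : ℓ∞(Γ, ℤ) → X_f is surjective. -/

import Mathlib

open scoped BigOperators

/-- Convolution `(g·h)(γ) = ∑ β, g β * h (β⁻¹ γ)` of real functions. -/
noncomputable def convR {Γ : Type*} [Group Γ] (g h : Γ → ℝ) : Γ → ℝ :=
  fun γ => ∑' β : Γ, g β * h (β⁻¹ * γ)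

/-- Indicator of the identity. -/
def deltaE (Γ : Type*) [Group Γ] [DecidableEq Γ] : Γ → ℝ :=
  fun γ => if γ = 1 then 1 else 0

/-- The adjoint `f*` of `f ∈ ℤΓ`: `f*(γ) = f(γ⁻¹)`. -/
def fstar {Γ : Type*} [Group Γ] (f : Γ →₀ ℤ) : Γ →₀ ℤ :=
  Finsupp.equivMapDomain (Equiv.inv Γ) f

/-- Convolution of a `𝕋`-valued function with `g ∈ ℤΓ`. -/
noncomputable def convT {Γ : Type*} [Group Γ] (x : Γ → AddCircle (1 : ℝ))
    (g : Γ →₀ ℤ) : Γ → AddCircle (1 : ℝ) :=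
  fun γ => ∑ β ∈ g.support, g β • x (γ * β⁻¹)

/-- `ξ(h) = π^Γ(h · f̂)` with `f̂ = (f⁻¹)*`. -/
noncomputable def xi {Γ : Type*} [Group Γ] (finv : Γ → ℝ) (h : Γ → ℤ) :
    Γ → AddCircle (1 : ℝ) :=
  fun γ => ((∑' β : Γ, (h (γ * β⁻¹) : ℝ) * finv β⁻¹ : ℝ) : AddCircle (1 : ℝ))

/-- `P(x) = L(x)·f*`, a finite sum over the support of `f*`. -/
def Pmap {Γ : Type*} [Group Γ] (f : Γ →₀ ℤ)
    (L : (Γ → AddCircle (1 : ℝ)) → Γ → ℝ) (x : Γ → AddCircle (1 : ℝ)) : Γ → ℝ :=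
  fun γ => ∑ β ∈ (fstar f).support, L x (γ * β⁻¹) * ((fstar f) β : ℝ)

/-- With `f ∈ ℤΓ` invertible in `ℓ¹(Γ)`, `κ ∈ [0,1]` irrational and `L` the lift
of `𝕋^Γ` into `[-1+κ, κ)^Γ`, for every `x ∈ X_f` the function `P(x) = L(x)·f*`
is integer valued and `ξ(P(x)) = x`; in particular `ξ : ℓ∞(Γ,ℤ) → X_f` is onto. -/
theorem stmt4 {Γ : Type*} [Group Γ] [Countable Γ] [DecidableEq Γ]
    (f : Γ →₀ ℤ) (finv : Γ → ℝ)
    (hfinv : Summable fun γ => ‖finv γ‖)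
    (h1 : convR (fun γ => (f γ : ℝ)) finv = deltaE Γ)
    (h2 : convR finv (fun γ => (f γ : ℝ)) = deltaE Γ)
    (κ : ℝ) (hκirr : Irrational κ) (hκ : κ ∈ Set.Icc (0 : ℝ) 1)
    (L : (Γ → AddCircle (1 : ℝ)) → Γ → ℝ)
    (hL : ∀ x γ, L x γ ∈ Set.Ico (-1 + κ) κ ∧
        ((L x γ : ℝ) : AddCircle (1 : ℝ)) = x γ) :
    ∀ x : Γ → AddCircle (1 : ℝ), (∀ γ, convT x (fstar f) γ = 0) →
      ∃ h : Γ → ℤ, (∀ γ, (h γ : ℝ) = Pmap f L x γ) ∧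
        (∃ M : ℤ, ∀ γ, |h γ| ≤ M) ∧ xi finv h = x := by
  intro x hx
  have hLb : ∀ γ, |L x γ| ≤ 1 := by
    intro γ
    obtain ⟨⟨h1', h2'⟩, _⟩ := hL x γ
    rw [abs_le]
    exact ⟨by linarith [hκ.1], by linarith [hκ.2]⟩
  have hint : ∀ γ, ∃ n : ℤ, (n : ℝ) = Pmap f L x γ := by
    intro γ
    have key : ((Pmap f L x γ : ℝ) : AddCircle (1 : ℝ)) = 0 := by
      rw [← hx γ]
      unfold Pmap convT
      rw [show ((∑ β ∈ (fstar f).support, L x (γ * β⁻¹) * ((fstar f) β : ℝ) : ℝ)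
            : AddCircle (1:ℝ))
          = ∑ β ∈ (fstar f).support,
              ((L x (γ * β⁻¹) * ((fstar f) β : ℝ) : ℝ) : AddCircle (1:ℝ)) from
        map_sum (QuotientAddGroup.mk' (AddSubgroup.zmultiples (1:ℝ))) _ _]
      refine Finset.sum_congr rfl fun β _ => ?_
      rw [show L x (γ * β⁻¹) * ((fstar f) β : ℝ) = (fstar f β) • L x (γ * β⁻¹) by
        rw [zsmul_eq_mul]; ring]
      show (((fstar f β) • L x (γ * β⁻¹) : ℝ) : AddCircle (1:ℝ)) = _
      rw [QuotientAddGroup.mk_zsmul]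
      exact congrArg _ ((hL x (γ * β⁻¹)).2)
    obtain ⟨n, hn⟩ := (AddCircle.coe_eq_zero_iff (p := (1:ℝ))).1 key
    exact ⟨n, by simpa using hn⟩
  choose h hh using hint
  refine ⟨h, hh, ?_, ?_⟩
  · refine ⟨∑ β ∈ (fstar f).support, |fstar f β|, fun γ => ?_⟩
    have hb : |(h γ : ℝ)| ≤ ((∑ β ∈ (fstar f).support, |fstar f β| : ℤ) : ℝ) := by
      rw [hh γ]
      unfold Pmap
      calc |∑ β ∈ (fstar f).support, L x (γ * β⁻¹) * ((fstar f) β : ℝ)|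
          ≤ ∑ β ∈ (fstar f).support, |L x (γ * β⁻¹) * ((fstar f) β : ℝ)| :=
            Finset.abs_sum_le_sum_abs _ _
        _ ≤ ∑ β ∈ (fstar f).support, |((fstar f) β : ℝ)| := by
            refine Finset.sum_le_sum fun β _ => ?_
            rw [abs_mul]
            calc |L x (γ * β⁻¹)| * |((fstar f) β : ℝ)|
                ≤ 1 * |((fstar f) β : ℝ)| :=
                  mul_le_mul_of_nonneg_right (hLb _) (abs_nonneg _)
              _ = _ := one_mul _
        _ = ((∑ β ∈ (fstar f).support, |fstar f β| : ℤ) : ℝ) := by push_cast; ring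
    exact_mod_cast hb
  · funext γ
    have hSinv : ∀ α : Γ, Summable fun β : Γ => ‖finv (β⁻¹ * α)‖ := by
      intro α
      exact (((Equiv.inv Γ).trans (Equiv.mulRight α)).summable_iff
        (f := fun γ => ‖finv γ‖)).2 hfinv
    have hbdd : ∀ (α : Γ) (C : ℝ) (b : Γ → ℝ), (∀ β, |b β| ≤ C) →
        Summable fun β => b β * finv (β⁻¹ * α) := by
      intro α C b hb
      refine Summable.of_norm_bounded
        ((hSinv α).mul_left C) fun β => ?_
      rw [norm_mul]
      exact mul_le_mul_of_nonneg_right (hb β) (norm_nonneg _)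
    have hbdd1 : ∀ (C : ℝ) (b : Γ → ℝ), (∀ β, |b β| ≤ C) →
        Summable fun β => b β * finv β⁻¹ := by
      intro C b hb
      simpa using hbdd 1 C b hb
    have key : (∑' β : Γ, (h (γ * β⁻¹) : ℝ) * finv β⁻¹) = L x γ := by
      have e1 : (∑' β : Γ, (h (γ * β⁻¹) : ℝ) * finv β⁻¹)
          = ∑' β : Γ, ∑ α ∈ (fstar f).support,
              (L x (γ * β⁻¹ * α⁻¹) * ((fstar f) α : ℝ)) * finv β⁻¹ := by
        refine tsum_congr fun β => ?_
        rw [hh]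
        unfold Pmap
        rw [Finset.sum_mul]
      rw [e1]
      have hC : ∀ α : Γ, ∀ β : Γ,
          |L x β * ((fstar f) α : ℝ)| ≤ 1 * |((fstar f) α : ℝ)| := fun α β => by
        rw [abs_mul]
        exact mul_le_mul_of_nonneg_right (hLb _) (abs_nonneg _)
      rw [Summable.tsum_finsetSum (fun α _ => hbdd1 (1 * |((fstar f) α : ℝ)|) _ (fun β => hC α _))]
      have e2 : ∀ α ∈ (fstar f).support,
          (∑' β : Γ, (L x (γ * β⁻¹ * α⁻¹) * ((fstar f) α : ℝ)) * finv β⁻¹)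
          = ∑' δ : Γ, (L x (γ * δ⁻¹) * ((fstar f) α : ℝ)) * finv (δ⁻¹ * α) := by
        intro α _
        rw [← (Equiv.mulLeft α⁻¹).tsum_eq
          (f := fun β => (L x (γ * β⁻¹ * α⁻¹) * ((fstar f) α : ℝ)) * finv β⁻¹)]
        refine tsum_congr fun δ => ?_
        simp [mul_inv_rev, mul_assoc]
      rw [Finset.sum_congr rfl e2]
      rw [← Summable.tsum_finsetSum (fun α _ => hbdd α (1 * |((fstar f) α : ℝ)|) _ (fun δ => hC α _))]
      have e3 : ∀ δ : Γ, (∑ α ∈ (fstar f).support,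
          (L x (γ * δ⁻¹) * ((fstar f) α : ℝ)) * finv (δ⁻¹ * α))
          = L x (γ * δ⁻¹) * deltaE Γ δ⁻¹ := by
        intro δ
        rw [show (∑ α ∈ (fstar f).support,
            (L x (γ * δ⁻¹) * ((fstar f) α : ℝ)) * finv (δ⁻¹ * α))
            = L x (γ * δ⁻¹) * ∑ α ∈ (fstar f).support, ((fstar f) α : ℝ) * finv (δ⁻¹ * α) by
          rw [Finset.mul_sum]
          exact Finset.sum_congr rfl fun α _ => by ring]
        congr 1
        rw [← h2]
        unfold convR
        rw [← (((Equiv.inv Γ).trans (Equiv.mulLeft δ⁻¹)).tsum_eq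
          (f := fun β => finv β * ((f (β⁻¹ * δ⁻¹) : ℤ) : ℝ)))]
        symm
        calc ∑' (α : Γ), finv (((Equiv.inv Γ).trans (Equiv.mulLeft δ⁻¹)) α) *
              ((f ((((Equiv.inv Γ).trans (Equiv.mulLeft δ⁻¹)) α)⁻¹ * δ⁻¹) : ℤ) : ℝ)
            = ∑' α : Γ, finv (δ⁻¹ * α⁻¹) * ((f α : ℤ) : ℝ) := by
              refine tsum_congr fun α => ?_
              have h1 : ((Equiv.inv Γ).trans (Equiv.mulLeft δ⁻¹)) α = δ⁻¹ * α⁻¹ := rfl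
              rw [h1]
              congr 2
              group
          _ = ∑ α ∈ f.support, finv (δ⁻¹ * α⁻¹) * ((f α : ℤ) : ℝ) :=
              tsum_eq_sum (fun α hα => by
                rw [Finsupp.notMem_support_iff.1 hα]; simp)
          _ = ∑ α ∈ (fstar f).support, ((fstar f) α : ℝ) * finv (δ⁻¹ * α) := by
              refine Finset.sum_nbij' (fun α => α⁻¹) (fun α => α⁻¹) ?_ ?_ ?_ ?_ ?_
              · intro α hα
                simp only [fstar, Finsupp.mem_support_iff,
                  Finsupp.equivMapDomain_apply, Equiv.inv_symm, Equiv.inv_apply,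
                  inv_inv] at *
                exact hα
              · intro α hα
                simp only [fstar, Finsupp.mem_support_iff,
                  Finsupp.equivMapDomain_apply, Equiv.inv_symm, Equiv.inv_apply,
                  inv_inv] at *
                exact hα
              · intro α _; simp
              · intro α _; simp
              · intro α _
                simp only [fstar, Finsupp.equivMapDomain_apply, Equiv.inv_symm,
                  Equiv.inv_apply, inv_inv]
                rw [mul_comm]
      rw [tsum_congr e3]
      rw [tsum_eq_single 1 (fun δ hδ => by
        have hz : deltaE Γ δ⁻¹ = 0 := by
          unfold deltaE
          rw [if_neg (by simpa using hδ)]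
        rw [hz, mul_zero])]
      unfold deltaE
      simp
    unfold xi
    rw [key]
    exact (hL x γ).2
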